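/- For every k ≥ 4, the string T'_k = abbbaaab·c·b^k over the alphabet {a, b, c} has smallest string attractor size γ(T'_k) = 5. Concretely, {1, 4, 6, 9, 10} is a string attractor of T'_k, and no string attractor of T'_k has fewer than 5 elements. -/

import Mathlib

variable {α : Type*} [DecidableEq α]

/-- `occ T S`: the set of 1-based starting positions of occurrences of `S` in `T`,
i.e. `{ i ∈ [1, |T|-|S|+1] : T[i..i+|S|-1] = S }`. -/
def occ (T S : List α) : Finset ℕ :=
  (Finset.Icc 1 (T.length + 1 - S.length)).filter fun i =>
    (T.drop (i - 1)).take S.length = S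

/-- `cover T S`: the set of 1-based text positions covered by some occurrence of `S` in `T`. -/
def cover (T S : List α) : Finset ℕ :=
  (occ T S).biUnion fun i => Finset.Icc i (i + S.length - 1)

/-- `Γ ⊆ [1, |T|]` is a string attractor of `T`: every nonempty substring of `T`
has an occurrence covering a position of `Γ`. -/
def IsAttractor (T : List α) (Γ : Finset ℕ) : Prop :=
  Γ ⊆ Finset.Icc 1 T.length ∧
    ∀ P : List α, P ≠ [] → P <:+: T → (Γ ∩ cover T P).Nonempty

/-- `γ(T)`: the smallest size of a string attractor of `T`. -/
noncomputable def gammaSize (T : List α) : ℕ :=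
  sInf {k | ∃ Γ : Finset ℕ, IsAttractor T Γ ∧ Γ.card = k}

/-- `S` is a minimal substring of `T`: a nonempty substring of `T` all of whose proper
nonempty substrings occur strictly more often in `T` than `S` does. -/
def MinimalSubstring (T S : List α) : Prop :=
  S ≠ [] ∧ S <:+: T ∧
    ∀ R : List α, R ≠ [] → R <:+: S → R ≠ S → (occ T S).card < (occ T R).card

/-! ### Auxiliary machinery -/

/-- The concrete text `abbbaaab · c · b^k` as a cons-list. -/
def Tk (a b c : α) (k : ℕ) : List α :=
  a::b::b::b::a::a::a::b::c::List.replicate k b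

lemma Tk_length (a b c : α) (k : ℕ) : (Tk a b c k).length = 9 + k := by
  simp [Tk]; omega

lemma mem_occ_iff (T S : List α) (i : ℕ) :
    i ∈ occ T S ↔ 1 ≤ i ∧ i ≤ T.length + 1 - S.length ∧ (T.drop (i-1)).take S.length = S := by
  simp [occ, Finset.mem_filter, Finset.mem_Icc, and_assoc]

lemma mem_cover_of {T S : List α} {i p : ℕ} (hi : i ∈ occ T S) (h1 : i ≤ p)
    (h2 : p ≤ i + S.length - 1) : p ∈ cover T S := by
  simp only [cover, Finset.mem_biUnion]
  exact ⟨i, hi, Finset.mem_Icc.2 ⟨h1, h2⟩⟩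

lemma getElem?_of_occ {T S : List α} {i : ℕ} (hi : i ∈ occ T S) {j : ℕ} (hj : j < S.length) :
    T[i - 1 + j]? = some S[j] := by
  obtain ⟨-, -, h⟩ := (mem_occ_iff T S i).1 hi
  have h2 := congrArg (fun l => l[j]?) h
  simpa only [List.getElem?_take, hj, if_true, List.getElem?_drop,
    List.getElem?_eq_getElem hj] using h2

lemma charAt (a b c : α) (k n : ℕ) (x : α)
    (h : (Tk a b c k)[n]? = some x) :
    (x = a ∧ (n = 0 ∨ n = 4 ∨ n = 5 ∨ n = 6)) ∨
    (x = b ∧ (n = 1 ∨ n = 2 ∨ n = 3 ∨ n = 7 ∨ (9 ≤ n ∧ n < 9 + k))) ∨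
    (x = c ∧ n = 8) := by
  rcases n with _|_|_|_|_|_|_|_|_|n <;>
    simp only [Tk, List.getElem?_cons_zero, List.getElem?_cons_succ,
      Option.some.injEq] at h
  · subst h; simp
  · subst h; simp
  · subst h; simp
  · subst h; simp
  · subst h; simp
  · subst h; simp
  · subst h; simp
  · subst h; simp
  · subst h; simp
  · rw [List.getElem?_replicate] at h
    split at h
    · right; left
      refine ⟨(Option.some.inj h).symm, ?_⟩
      omega
    · exact absurd h (by simp)

lemma cover_subset {T P : List α} {i0 : ℕ} (h : occ T P ⊆ {i0}) :
    cover T P ⊆ Finset.Icc i0 (i0 + P.length - 1) := by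
  intro p hp
  simp only [cover, Finset.mem_biUnion] at hp
  obtain ⟨j, hj, hpj⟩ := hp
  have hj0 : j = i0 := Finset.mem_singleton.1 (h hj)
  subst hj0
  exact hpj

section occbounds
variable {a b c : α} (hab : a ≠ b) (hac : a ≠ c) (hbc : b ≠ c) (k : ℕ)

include hab hac hbc

lemma occ_abb : occ (Tk a b c k) [a,b,b] ⊆ {1} := by
  intro j hj
  have h1 := ((mem_occ_iff _ _ j).1 hj).1
  have e0 := getElem?_of_occ hj (j := 0) (by simp)
  have e1 := getElem?_of_occ hj (j := 1) (by simp)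
  have e2 := getElem?_of_occ hj (j := 2) (by simp)
  simp only [List.getElem_cons_zero, List.getElem_cons_succ] at e0 e1 e2
  have d0 := charAt a b c k _ _ e0
  have d1 := charAt a b c k _ _ e1
  have d2 := charAt a b c k _ _ e2
  simp only [hab, hac, hbc, Ne.symm hab, Ne.symm hac, Ne.symm hbc,
    false_and, false_or, or_false, true_and, eq_self_iff_true] at d0 d1 d2
  simp only [Finset.mem_singleton]
  omega

lemma occ_ba : occ (Tk a b c k) [b,a] ⊆ {4} := by
  intro j hj
  have h1 := ((mem_occ_iff _ _ j).1 hj).1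
  have e0 := getElem?_of_occ hj (j := 0) (by simp)
  have e1 := getElem?_of_occ hj (j := 1) (by simp)
  simp only [List.getElem_cons_zero, List.getElem_cons_succ] at e0 e1
  have d0 := charAt a b c k _ _ e0
  have d1 := charAt a b c k _ _ e1
  simp only [hab, hac, hbc, Ne.symm hab, Ne.symm hac, Ne.symm hbc,
    false_and, false_or, or_false, true_and, eq_self_iff_true] at d0 d1
  simp only [Finset.mem_singleton]
  omega

lemma occ_aab : occ (Tk a b c k) [a,a,b] ⊆ {6} := by
  intro j hj
  have h1 := ((mem_occ_iff _ _ j).1 hj).1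
  have e0 := getElem?_of_occ hj (j := 0) (by simp)
  have e1 := getElem?_of_occ hj (j := 1) (by simp)
  have e2 := getElem?_of_occ hj (j := 2) (by simp)
  simp only [List.getElem_cons_zero, List.getElem_cons_succ] at e0 e1 e2
  have d0 := charAt a b c k _ _ e0
  have d1 := charAt a b c k _ _ e1
  have d2 := charAt a b c k _ _ e2
  simp only [hab, hac, hbc, Ne.symm hab, Ne.symm hac, Ne.symm hbc,
    false_and, false_or, or_false, true_and, eq_self_iff_true] at d0 d1 d2
  simp only [Finset.mem_singleton]
  omega

lemma occ_c : occ (Tk a b c k) [c] ⊆ {9} := by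
  intro j hj
  have h1 := ((mem_occ_iff _ _ j).1 hj).1
  have e0 := getElem?_of_occ hj (j := 0) (by simp)
  simp only [List.getElem_cons_zero] at e0
  have d0 := charAt a b c k _ _ e0
  simp only [hab, hac, hbc, Ne.symm hab, Ne.symm hac, Ne.symm hbc,
    false_and, false_or, or_false, true_and, eq_self_iff_true] at d0
  simp only [Finset.mem_singleton]
  omega

lemma occ_bk (hk : 4 ≤ k) : occ (Tk a b c k) (List.replicate k b) ⊆ {10} := by
  intro j hj
  have h1 := ((mem_occ_iff _ _ j).1 hj).1
  have h2 := ((mem_occ_iff _ _ j).1 hj).2.1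
  rw [Tk_length] at h2
  simp only [List.length_replicate] at h2
  have e0 := getElem?_of_occ hj (j := 0) (by simp; omega)
  have e1 := getElem?_of_occ hj (j := 1) (by simp; omega)
  have e2 := getElem?_of_occ hj (j := 2) (by simp; omega)
  have e3 := getElem?_of_occ hj (j := 3) (by simp; omega)
  simp only [List.getElem_replicate] at e0 e1 e2 e3
  have d0 := charAt a b c k _ _ e0
  have d1 := charAt a b c k _ _ e1
  have d2 := charAt a b c k _ _ e2
  have d3 := charAt a b c k _ _ e3
  simp only [hab, hac, hbc, Ne.symm hab, Ne.symm hac, Ne.symm hbc,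
    false_and, false_or, or_false, true_and, eq_self_iff_true] at d0 d1 d2 d3
  simp only [Finset.mem_singleton]
  omega

end occbounds

lemma lower_bound {a b c : α} (hab : a ≠ b) (hac : a ≠ c) (hbc : b ≠ c)
    {k : ℕ} (hk : 4 ≤ k) (Γ : Finset ℕ) (hΓ : IsAttractor (Tk a b c k) Γ) :
    5 ≤ Γ.card := by
  obtain ⟨-, hatt⟩ := hΓ
  obtain ⟨x1, hx1⟩ := hatt [a,b,b] (by simp)
    ⟨[], b::a::a::a::b::c::List.replicate k b, by simp [Tk]⟩
  obtain ⟨x2, hx2⟩ := hatt [b,a] (by simp)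
    ⟨[a,b,b], a::a::b::c::List.replicate k b, by simp [Tk]⟩
  obtain ⟨x3, hx3⟩ := hatt [a,a,b] (by simp)
    ⟨[a,b,b,b,a], c::List.replicate k b, by simp [Tk]⟩
  obtain ⟨x4, hx4⟩ := hatt [c] (by simp)
    ⟨[a,b,b,b,a,a,a,b], List.replicate k b, by simp [Tk]⟩
  obtain ⟨x5, hx5⟩ := hatt (List.replicate k b) (by simp; omega)
    ⟨[a,b,b,b,a,a,a,b,c], [], by simp [Tk]⟩
  rw [Finset.mem_inter] at hx1 hx2 hx3 hx4 hx5
  have b1 := Finset.mem_Icc.1 (cover_subset (occ_abb hab hac hbc k) hx1.2)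
  have b2 := Finset.mem_Icc.1 (cover_subset (occ_ba hab hac hbc k) hx2.2)
  have b3 := Finset.mem_Icc.1 (cover_subset (occ_aab hab hac hbc k) hx3.2)
  have b4 := Finset.mem_Icc.1 (cover_subset (occ_c hab hac hbc k) hx4.2)
  have b5 := Finset.mem_Icc.1 (cover_subset (occ_bk hab hac hbc k hk) hx5.2)
  simp only [List.length_cons, List.length_nil, List.length_replicate] at b1 b2 b3 b4 b5
  have hsub : ({x1, x2, x3, x4, x5} : Finset ℕ) ⊆ Γ := by
    intro y hy
    simp only [Finset.mem_insert, Finset.mem_singleton] at hy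
    rcases hy with rfl | rfl | rfl | rfl | rfl
    exacts [hx1.1, hx2.1, hx3.1, hx4.1, hx5.1]
  have hcard : ({x1, x2, x3, x4, x5} : Finset ℕ).card = 5 := by
    rw [Finset.card_insert_of_notMem (by simp; omega),
        Finset.card_insert_of_notMem (by simp; omega),
        Finset.card_insert_of_notMem (by simp; omega),
        Finset.card_insert_of_notMem (by simp; omega),
        Finset.card_singleton]
  calc 5 = ({x1, x2, x3, x4, x5} : Finset ℕ).card := hcard.symm
    _ ≤ Γ.card := Finset.card_le_card hsub

lemma upper_bound {a b c : α} (hab : a ≠ b) (hac : a ≠ c) (hbc : b ≠ c)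
    {k : ℕ} (hk : 4 ≤ k) : IsAttractor (Tk a b c k) {1,4,6,9,10} := by
  have hlen := Tk_length a b c k
  constructor
  · intro x hx
    simp only [Finset.mem_insert, Finset.mem_singleton] at hx
    rw [Finset.mem_Icc, hlen]
    rcases hx with rfl | rfl | rfl | rfl | rfl <;> omega
  · intro P hP hinf
    obtain ⟨s, t, hst⟩ := hinf
    have hm : 1 ≤ P.length := List.length_pos_iff.2 hP
    have hlen2 : s.length + P.length + t.length = 9 + k := by
      have := congrArg List.length hst
      simp only [List.length_append, hlen] at this
      omega
    set i := s.length + 1 with hi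
    have hocc : i ∈ occ (Tk a b c k) P := by
      rw [mem_occ_iff, hlen]
      refine ⟨by omega, by omega, ?_⟩
      rw [← hst, show i - 1 = s.length from by omega, List.append_assoc,
        List.drop_left, List.take_left]
    by_cases h9 : i ≤ 9 ∧ 9 ≤ i + P.length - 1
    · exact ⟨9, Finset.mem_inter.2 ⟨by decide, mem_cover_of hocc h9.1 h9.2⟩⟩
    by_cases h10 : 10 ≤ i
    · -- occurrence entirely within the b^k block
      have hmk : P.length ≤ k := by omega
      have hPb : P = List.replicate P.length b := by
        have h3 := ((mem_occ_iff _ _ i).1 hocc).2.2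
        rw [show i - 1 = 9 + (i - 10) from by omega] at h3
        rw [show (Tk a b c k) = [a,b,b,b,a,a,a,b,c] ++ List.replicate k b from by
          simp [Tk]] at h3
        rw [show (9 : ℕ) + (i - 10) = ([a,b,b,b,a,a,a,b,c] : List α).length + (i - 10) from by
          simp, List.drop_length_add_append, List.drop_replicate, List.take_replicate] at h3
        rw [min_eq_left (by omega : P.length ≤ k - (i - 10))] at h3
        exact h3.symm
      have hocc10 : (10 : ℕ) ∈ occ (Tk a b c k) P := by
        rw [mem_occ_iff, hlen]
        refine ⟨by omega, by omega, ?_⟩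
        rw [show (10 : ℕ) - 1 = 9 from rfl]
        rw [show (Tk a b c k) = [a,b,b,b,a,a,a,b,c] ++ List.replicate k b from by simp [Tk]]
        rw [show (9 : ℕ) = ([a,b,b,b,a,a,a,b,c] : List α).length from by simp,
          List.drop_left, List.take_replicate]
        rw [show P.length ⊓ k = P.length from by omega]
        exact hPb.symm
      exact ⟨10, Finset.mem_inter.2 ⟨by decide,
        mem_cover_of hocc10 le_rfl (by omega)⟩⟩
    by_cases h1 : i = 1
    · exact ⟨1, Finset.mem_inter.2 ⟨by decide, mem_cover_of hocc (by omega) (by omega)⟩⟩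
    by_cases h4 : i ≤ 4 ∧ 4 ≤ i + P.length - 1
    · exact ⟨4, Finset.mem_inter.2 ⟨by decide, mem_cover_of hocc h4.1 h4.2⟩⟩
    by_cases h6 : i ≤ 6 ∧ 6 ≤ i + P.length - 1
    · exact ⟨6, Finset.mem_inter.2 ⟨by decide, mem_cover_of hocc h6.1 h6.2⟩⟩
    -- small residual cases
    have hoccb4 : (4 : ℕ) ∈ occ (Tk a b c k) [b] := by
      rw [mem_occ_iff, hlen]
      exact ⟨by omega, by simp only [List.length_cons, List.length_nil]; omega, by simp [Tk]⟩
    have hocca6 : (6 : ℕ) ∈ occ (Tk a b c k) [a] := by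
      rw [mem_occ_iff, hlen]
      exact ⟨by omega, by simp only [List.length_cons, List.length_nil]; omega, by simp [Tk]⟩
    have hoccbb3 : (3 : ℕ) ∈ occ (Tk a b c k) [b,b] := by
      rw [mem_occ_iff, hlen]
      exact ⟨by omega, by simp only [List.length_cons, List.length_nil]; omega, by simp [Tk]⟩
    have hoccab1 : (1 : ℕ) ∈ occ (Tk a b c k) [a,b] := by
      rw [mem_occ_iff, hlen]
      exact ⟨by omega, by simp only [List.length_cons, List.length_nil]; omega, by simp [Tk]⟩
    have h3 := ((mem_occ_iff _ _ i).1 hocc).2.2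
    have hcases : (i = 2 ∧ P.length = 1) ∨ (i = 2 ∧ P.length = 2) ∨ (i = 3 ∧ P.length = 1) ∨
        (i = 5 ∧ P.length = 1) ∨ (i = 7 ∧ P.length = 1) ∨ (i = 7 ∧ P.length = 2) ∨
        (i = 8 ∧ P.length = 1) := by omega
    rcases hcases with ⟨hi2, hm2⟩ | ⟨hi2, hm2⟩ | ⟨hi2, hm2⟩ | ⟨hi2, hm2⟩ | ⟨hi2, hm2⟩ |
      ⟨hi2, hm2⟩ | ⟨hi2, hm2⟩ <;> rw [hi2, hm2] at h3 <;> simp [Tk] at h3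
    · rw [← h3] at *
      exact ⟨4, Finset.mem_inter.2 ⟨by decide, mem_cover_of hoccb4 le_rfl (by simp)⟩⟩
    · rw [← h3] at *
      exact ⟨4, Finset.mem_inter.2 ⟨by decide, mem_cover_of hoccbb3 (by omega) (by simp)⟩⟩
    · rw [← h3] at *
      exact ⟨4, Finset.mem_inter.2 ⟨by decide, mem_cover_of hoccb4 le_rfl (by simp)⟩⟩
    · rw [← h3] at *
      exact ⟨6, Finset.mem_inter.2 ⟨by decide, mem_cover_of hocca6 le_rfl (by simp)⟩⟩
    · rw [← h3] at *
      exact ⟨6, Finset.mem_inter.2 ⟨by decide, mem_cover_of hocca6 le_rfl (by simp)⟩⟩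
    · rw [← h3] at *
      exact ⟨1, Finset.mem_inter.2 ⟨by decide, mem_cover_of hoccab1 le_rfl (by simp)⟩⟩
    · rw [← h3] at *
      exact ⟨4, Finset.mem_inter.2 ⟨by decide, mem_cover_of hoccb4 le_rfl (by simp)⟩⟩

/-- For every `k ≥ 4`, the string `T'_k = abbbaaab · c · b^k` (with `a, b, c` pairwise
distinct) has smallest string attractor size `γ(T'_k) = 5`: concretely `{1, 4, 6, 9, 10}`
is a string attractor of `T'_k`, and every string attractor has at least `5` elements. -/
theorem gammaSize_abbbaaab_c_bk (a b c : α)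
    (hab : a ≠ b) (hac : a ≠ c) (hbc : b ≠ c) (k : ℕ) (hk : 4 ≤ k)
    (T : List α) (hT : T = [a, b, b, b, a, a, a, b] ++ [c] ++ List.replicate k b) :
    gammaSize T = 5 ∧
    IsAttractor T {1, 4, 6, 9, 10} ∧
    (∀ Γ : Finset ℕ, IsAttractor T Γ → 5 ≤ Γ.card) := by
  have hTk : T = Tk a b c k := by rw [hT]; simp [Tk]
  subst hTk
  have hup := upper_bound hab hac hbc hk
  have hlow := fun Γ hΓ => lower_bound hab hac hbc hk Γ hΓ
  refine ⟨?_, hup, hlow⟩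
  have h5 : 5 ∈ {n | ∃ Γ : Finset ℕ, IsAttractor (Tk a b c k) Γ ∧ Γ.card = n} :=
    ⟨{1,4,6,9,10}, hup, by decide⟩
  apply le_antisymm
  · exact Nat.sInf_le h5
  · refine le_csInf ⟨5, h5⟩ ?_
    rintro n ⟨Γ, hΓ, rfl⟩
    exact hlow Γ hΓ
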